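/- Given m sample tuples (s⁰_j, s_j, a_j, r_j, s'_j), j = 1,…,m, and an invertible positive semidefinite matrix Σ ∈ ℝ^{D×D}, define the empirical Lagrangian L̂_λ(d, ν; g, ω) = ν^⊤ Σ^{-1} · (1/m) Σ_{j=1}^m φ(s_j,a_j)(r_j + γ·g(s'_j) − φ(s_j,a_j)^⊤ω) − (λ/2) ν^⊤ν + (1/m) Σ_{j=1}^m g(s⁰_j) + ⟨d, Φω − B^⊤g⟩. Suppose ‖φ(s_j,a_j)‖₂ ≤ 1 and |r_j| ≤ √D for every j, ‖Φ^⊤d‖₂ ≤ 1/(1−γ), ‖Σ‖₂ ≤ D, and ‖g‖₂ ≤ G. If ν, ν̃ ∈ ℝ^D satisfy ‖Σ^{-1}(ν − ν̃)‖₂ ≤ ε₁ and max{‖Σ^{-1}ν‖₂, ‖Σ^{-1}ν̃‖₂} ≤ V, and ω, ω̃ ∈ ℝ^D satisfy ‖ω − ω̃‖₂ ≤ ε₂ and max{‖ω‖₂, ‖ω̃‖₂} ≤ W, then |L̂_λ(d, ν; g, ω) − L̂_λ(d, ν̃; g, ω̃)| ≤ ε₁ · (√D + γ·G + W + λ·D²·V)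 + ε₂ · (V + 1/(1−γ)). -/

import Mathlib

open Matrix BigOperators

noncomputable def e2norm {n : Type*} [Fintype n] (x : n → ℝ) : ℝ :=
  Real.sqrt (∑ i, (x i)^2)

noncomputable def specNorm {m n : Type*} [Fintype m] [Fintype n] [DecidableEq n]
    (M : Matrix m n ℝ) : ℝ :=
  ‖LinearMap.toContinuousLinearMap (Matrix.toEuclideanLin M)‖

lemma e2norm_eq_norm {n : Type*} [Fintype n] (x : n → ℝ) :
    e2norm x = ‖(WithLp.equiv 2 (n → ℝ)).symm x‖ := by
  rw [EuclideanSpace.norm_eq]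
  simp [e2norm, sq_abs]

lemma e2norm_nonneg {n : Type*} [Fintype n] (x : n → ℝ) : 0 ≤ e2norm x :=
  Real.sqrt_nonneg _

lemma abs_dotProduct_le {n : Type*} [Fintype n] (x y : n → ℝ) :
    |x ⬝ᵥ y| ≤ e2norm x * e2norm y := by
  rw [e2norm_eq_norm, e2norm_eq_norm]
  have hxy : x ⬝ᵥ y = inner ℝ ((WithLp.equiv 2 (n → ℝ)).symm x) ((WithLp.equiv 2 (n → ℝ)).symm y) := by
    simp [PiLp.inner_apply, RCLike.inner_apply, dotProduct, mul_comm]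
  rw [hxy]
  exact abs_real_inner_le_norm _ _

lemma e2norm_mulVec_le {m n : Type*} [Fintype m] [Fintype n] [DecidableEq n]
    (M : Matrix m n ℝ) (x : n → ℝ) :
    e2norm (M.mulVec x) ≤ specNorm M * e2norm x := by
  rw [e2norm_eq_norm, e2norm_eq_norm]
  have h := (LinearMap.toContinuousLinearMap (Matrix.toEuclideanLin M)).le_opNorm
    ((WithLp.equiv 2 (n → ℝ)).symm x)
  simpa [specNorm, Matrix.toEuclideanLin_toLp] using h

lemma e2norm_smul {n : Type*} [Fintype n] (a : ℝ) (x : n → ℝ) :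
    e2norm (a • x) = |a| * e2norm x := by
  rw [e2norm_eq_norm, e2norm_eq_norm]
  have : (WithLp.equiv 2 (n → ℝ)).symm (a • x) = a • (WithLp.equiv 2 (n → ℝ)).symm x := rfl
  rw [this, norm_smul, Real.norm_eq_abs]

lemma e2norm_add_le {n : Type*} [Fintype n] (x y : n → ℝ) :
    e2norm (x + y) ≤ e2norm x + e2norm y := by
  rw [e2norm_eq_norm, e2norm_eq_norm, e2norm_eq_norm]
  exact norm_add_le _ _

lemma e2norm_sum_le {n ι : Type*} [Fintype n] (s : Finset ι) (v : ι → n → ℝ) :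
    e2norm (∑ j ∈ s, v j) ≤ ∑ j ∈ s, e2norm (v j) := by
  simp only [e2norm_eq_norm]
  have : (WithLp.equiv 2 (n → ℝ)).symm (∑ j ∈ s, v j) = ∑ j ∈ s, (WithLp.equiv 2 (n → ℝ)).symm (v j) := by
    simp [WithLp.toLp_sum]
  rw [this]
  exact norm_sum_le s fun j => (WithLp.equiv 2 (n → ℝ)).symm (v j)

lemma e2norm_neg {n : Type*} [Fintype n] (x : n → ℝ) : e2norm (-x) = e2norm x := by
  simp [e2norm, neg_sq]

lemma abs_apply_le_e2norm {n : Type*} [Fintype n] (x : n → ℝ) (i : n) :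
    |x i| ≤ e2norm x := by
  rw [← Real.sqrt_sq_eq_abs]
  exact Real.sqrt_le_sqrt (Finset.single_le_sum (fun j _ => sq_nonneg (x j)) (Finset.mem_univ i))

/-- Lipschitz continuity of the empirical Lagrangian in `(ν, ω)`. -/
theorem empirical_lagrangian_lipschitz
    (S A D m : ℕ) (hm : 0 < m)
    (γ lam G V W ε₁ ε₂ : ℝ) (hγ0 : 0 < γ) (hγ1 : γ < 1) (hlam : 0 < lam)
    (Φ : Matrix (Fin S × Fin A) (Fin D) ℝ)
    (B : Matrix (Fin S) (Fin S × Fin A) ℝ)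
    (hB : ∀ s sa, B s sa = if sa.1 = s then 1 else 0)
    -- sample tuples (s⁰_j, (s_j, a_j), r_j, s'_j)
    (s0 : Fin m → Fin S) (sa : Fin m → Fin S × Fin A)
    (rj : Fin m → ℝ) (snext : Fin m → Fin S)
    (hφj : ∀ j, e2norm (Φ (sa j)) ≤ 1)
    (hrj : ∀ j, |rj j| ≤ Real.sqrt D)
    (Sig : Matrix (Fin D) (Fin D) ℝ)
    (hSiginv : IsUnit Sig.det) (hSigpsd : Sig.PosSemidef) (hSignorm : specNorm Sig ≤ D)
    (d : Fin S × Fin A → ℝ) (hd : e2norm (Φᵀ.mulVec d) ≤ 1 / (1 - γ))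
    (g : Fin S → ℝ) (hg : e2norm g ≤ G)
    (ν ν' ω ω' : Fin D → ℝ)
    (hνdiff : e2norm (Sig⁻¹.mulVec (ν - ν')) ≤ ε₁)
    (hνV : e2norm (Sig⁻¹.mulVec ν) ≤ V) (hν'V : e2norm (Sig⁻¹.mulVec ν') ≤ V)
    (hωdiff : e2norm (ω - ω') ≤ ε₂)
    (hωW : e2norm ω ≤ W) (hω'W : e2norm ω' ≤ W)
    -- the empirical Lagrangian
    (Lhat : (Fin S × Fin A → ℝ) → (Fin D → ℝ) → (Fin S → ℝ) → (Fin D → ℝ) → ℝ)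
    (hLhat : ∀ d₀ ν₀ g₀ ω₀, Lhat d₀ ν₀ g₀ ω₀ =
      ν₀ ⬝ᵥ Sig⁻¹.mulVec ((m : ℝ)⁻¹ •
          ∑ j, (rj j + γ * g₀ (snext j) - Φ (sa j) ⬝ᵥ ω₀) • Φ (sa j))
        - lam / 2 * (ν₀ ⬝ᵥ ν₀)
        + (m : ℝ)⁻¹ * ∑ j, g₀ (s0 j)
        + d₀ ⬝ᵥ (Φ.mulVec ω₀ - Bᵀ.mulVec g₀)) :
    |Lhat d ν g ω - Lhat d ν' g ω'|
      ≤ ε₁ * (Real.sqrt D + γ * G + W + lam * D^2 * V)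
        + ε₂ * (V + 1 / (1 - γ)) := by
  -- notation
  set u : (Fin D → ℝ) → (Fin D → ℝ) := fun ω₀ =>
    (m : ℝ)⁻¹ • ∑ j, (rj j + γ * g (snext j) - Φ (sa j) ⬝ᵥ ω₀) • Φ (sa j) with hu
  -- symmetry of Sig⁻¹
  have hsymm : (Sig⁻¹)ᵀ = Sig⁻¹ := by
    rw [Matrix.transpose_nonsing_inv]
    congr 1
    rw [← Matrix.conjTranspose_eq_transpose_of_trivial]
    exact hSigpsd.1
  have hdotinv : ∀ x y : Fin D → ℝ, x ⬝ᵥ Sig⁻¹.mulVec y = (Sig⁻¹.mulVec x) ⬝ᵥ y := by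
    intro x y
    rw [Matrix.dotProduct_mulVec, ← Matrix.mulVec_transpose, hsymm]
  -- auxiliary nonnegativity
  have hG0 : 0 ≤ G := le_trans (e2norm_nonneg g) hg
  have hW0 : 0 ≤ W := le_trans (e2norm_nonneg ω) hωW
  have hV0 : 0 ≤ V := le_trans (e2norm_nonneg _) hνV
  have hε₁0 : 0 ≤ ε₁ := le_trans (e2norm_nonneg _) hνdiff
  have hε₂0 : 0 ≤ ε₂ := le_trans (e2norm_nonneg _) hωdiff
  have hD0 : (0:ℝ) ≤ D := Nat.cast_nonneg D
  have hγ' : (0:ℝ) ≤ 1 / (1 - γ) := div_nonneg zero_le_one (by linarith)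
  -- bound on e2norm (u ω₀)
  have hMnn : 0 ≤ Real.sqrt D + γ * G + W := by positivity
  have hub : ∀ ω₀ : Fin D → ℝ, e2norm ω₀ ≤ W →
      e2norm (u ω₀) ≤ Real.sqrt D + γ * G + W := by
    intro ω₀ hω₀
    rw [hu]
    simp only
    rw [e2norm_smul]
    have h1 : e2norm (∑ j, (rj j + γ * g (snext j) - Φ (sa j) ⬝ᵥ ω₀) • Φ (sa j))
        ≤ ∑ j : Fin m, (Real.sqrt D + γ * G + W) := by
      refine le_trans (e2norm_sum_le _ _) (Finset.sum_le_sum fun j _ => ?_)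
      rw [e2norm_smul]
      have hc : |rj j + γ * g (snext j) - Φ (sa j) ⬝ᵥ ω₀| ≤ Real.sqrt D + γ * G + W := by
        have h2 : |γ * g (snext j)| ≤ γ * G := by
          rw [abs_mul, abs_of_pos hγ0]
          exact mul_le_mul_of_nonneg_left (le_trans (abs_apply_le_e2norm g _) hg) hγ0.le
        have h3 : |Φ (sa j) ⬝ᵥ ω₀| ≤ W := by
          refine le_trans (abs_dotProduct_le _ _) ?_
          calc e2norm (Φ (sa j)) * e2norm ω₀ ≤ 1 * W :=
                mul_le_mul (hφj j) hω₀ (e2norm_nonneg _) zero_le_one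
            _ = W := one_mul W
        refine le_trans (abs_sub _ _) ?_
        exact add_le_add (le_trans (abs_add_le _ _) (add_le_add (hrj j) h2)) h3
      calc |rj j + γ * g (snext j) - Φ (sa j) ⬝ᵥ ω₀| * e2norm (Φ (sa j))
          ≤ (Real.sqrt D + γ * G + W) * 1 :=
            mul_le_mul hc (hφj j) (e2norm_nonneg _) hMnn
        _ = _ := mul_one _
    rw [Finset.sum_const, Finset.card_univ, Fintype.card_fin, nsmul_eq_mul] at h1
    calc |(m:ℝ)⁻¹| * e2norm (∑ j, (rj j + γ * g (snext j) - Φ (sa j) ⬝ᵥ ω₀) • Φ (sa j))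
        ≤ (m:ℝ)⁻¹ * ((m:ℝ) * (Real.sqrt D + γ * G + W)) := by
          rw [abs_of_nonneg (by positivity)]
          exact mul_le_mul_of_nonneg_left h1 (by positivity)
      _ = Real.sqrt D + γ * G + W := by
          rw [← mul_assoc, inv_mul_cancel₀ (Nat.cast_ne_zero.mpr hm.ne'), one_mul]
  -- bound on e2norm (u ω - u ω')
  have hudiff : e2norm (u ω - u ω') ≤ ε₂ := by
    have hrepr : u ω - u ω' = (m : ℝ)⁻¹ • ∑ j, ((Φ (sa j) ⬝ᵥ (ω' - ω)) • Φ (sa j)) := by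
      rw [hu]
      simp only
      rw [← smul_sub, ← Finset.sum_sub_distrib]
      congr 1
      refine Finset.sum_congr rfl fun j _ => ?_
      rw [← sub_smul, dotProduct_sub]
      ring_nf
    rw [hrepr, e2norm_smul]
    have h1 : e2norm (∑ j, ((Φ (sa j) ⬝ᵥ (ω' - ω)) • Φ (sa j))) ≤ ∑ j : Fin m, ε₂ := by
      refine le_trans (e2norm_sum_le _ _) (Finset.sum_le_sum fun j _ => ?_)
      rw [e2norm_smul]
      have h2 : |Φ (sa j) ⬝ᵥ (ω' - ω)| ≤ ε₂ := by
        refine le_trans (abs_dotProduct_le _ _) ?_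
        have : e2norm (ω' - ω) ≤ ε₂ := by
          rw [show ω' - ω = -(ω - ω') by ring, e2norm_neg]
          exact hωdiff
        calc e2norm (Φ (sa j)) * e2norm (ω' - ω) ≤ 1 * ε₂ :=
              mul_le_mul (hφj j) this (e2norm_nonneg _) zero_le_one
          _ = ε₂ := one_mul _
      calc |Φ (sa j) ⬝ᵥ (ω' - ω)| * e2norm (Φ (sa j)) ≤ ε₂ * 1 :=
            mul_le_mul h2 (hφj j) (e2norm_nonneg _) hε₂0
        _ = ε₂ := mul_one _
    rw [Finset.sum_const, Finset.card_univ, Fintype.card_fin, nsmul_eq_mul] at h1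
    calc |(m:ℝ)⁻¹| * e2norm (∑ j, ((Φ (sa j) ⬝ᵥ (ω' - ω)) • Φ (sa j)))
        ≤ (m:ℝ)⁻¹ * ((m:ℝ) * ε₂) := by
          rw [abs_of_nonneg (by positivity)]
          exact mul_le_mul_of_nonneg_left h1 (by positivity)
      _ = ε₂ := by
          rw [← mul_assoc, inv_mul_cancel₀ (Nat.cast_ne_zero.mpr hm.ne'), one_mul]
  -- recover ν from Sig⁻¹ ν
  have hrec : ∀ x : Fin D → ℝ, Sig.mulVec (Sig⁻¹.mulVec x) = x := by
    intro x
    rw [Matrix.mulVec_mulVec, Matrix.mul_nonsing_inv Sig hSiginv, Matrix.one_mulVec]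
  have hnν : e2norm ν ≤ D * V := by
    calc e2norm ν = e2norm (Sig.mulVec (Sig⁻¹.mulVec ν)) := by rw [hrec]
      _ ≤ specNorm Sig * e2norm (Sig⁻¹.mulVec ν) := e2norm_mulVec_le _ _
      _ ≤ D * V := mul_le_mul hSignorm hνV (e2norm_nonneg _) hD0
  have hnν' : e2norm ν' ≤ D * V := by
    calc e2norm ν' = e2norm (Sig.mulVec (Sig⁻¹.mulVec ν')) := by rw [hrec]
      _ ≤ specNorm Sig * e2norm (Sig⁻¹.mulVec ν') := e2norm_mulVec_le _ _
      _ ≤ D * V := mul_le_mul hSignorm hν'V (e2norm_nonneg _) hD0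
  have hnνdiff : e2norm (ν - ν') ≤ D * ε₁ := by
    calc e2norm (ν - ν') = e2norm (Sig.mulVec (Sig⁻¹.mulVec (ν - ν'))) := by rw [hrec]
      _ ≤ specNorm Sig * e2norm (Sig⁻¹.mulVec (ν - ν')) := e2norm_mulVec_le _ _
      _ ≤ D * ε₁ := mul_le_mul hSignorm hνdiff (e2norm_nonneg _) hD0
  -- the four bounds
  have b1 : |Sig⁻¹.mulVec (ν - ν') ⬝ᵥ u ω| ≤ ε₁ * (Real.sqrt D + γ * G + W) := by
    refine le_trans (abs_dotProduct_le _ _) ?_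
    exact mul_le_mul hνdiff (hub ω hωW) (e2norm_nonneg _) hε₁0
  have b2 : |Sig⁻¹.mulVec ν' ⬝ᵥ (u ω - u ω')| ≤ V * ε₂ := by
    refine le_trans (abs_dotProduct_le _ _) ?_
    exact mul_le_mul hν'V hudiff (e2norm_nonneg _) hV0
  have b3 : |lam / 2 * ((ν + ν') ⬝ᵥ (ν - ν'))| ≤ ε₁ * (lam * D^2 * V) := by
    rw [abs_mul, abs_of_pos (by positivity : (0:ℝ) < lam / 2)]
    have h1 : |(ν + ν') ⬝ᵥ (ν - ν')| ≤ (D * V + D * V) * (D * ε₁) := by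
      refine le_trans (abs_dotProduct_le _ _) ?_
      have ha : e2norm (ν + ν') ≤ D * V + D * V :=
        le_trans (e2norm_add_le ν ν') (add_le_add hnν hnν')
      exact mul_le_mul ha hnνdiff (e2norm_nonneg _)
        (le_trans (e2norm_nonneg _) ha)
    calc lam / 2 * |(ν + ν') ⬝ᵥ (ν - ν')|
        ≤ lam / 2 * ((D * V + D * V) * (D * ε₁)) :=
          mul_le_mul_of_nonneg_left h1 (by positivity)
      _ = ε₁ * (lam * D^2 * V) := by ring
  have b4 : |Φᵀ.mulVec d ⬝ᵥ (ω - ω')| ≤ (1 / (1 - γ)) * ε₂ := by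
    refine le_trans (abs_dotProduct_le _ _) ?_
    exact mul_le_mul hd hωdiff (e2norm_nonneg _) hγ'
  -- the key algebraic identity
  have key : Lhat d ν g ω - Lhat d ν' g ω' =
      Sig⁻¹.mulVec (ν - ν') ⬝ᵥ u ω + Sig⁻¹.mulVec ν' ⬝ᵥ (u ω - u ω')
      - lam / 2 * ((ν + ν') ⬝ᵥ (ν - ν'))
      + Φᵀ.mulVec d ⬝ᵥ (ω - ω') := by
    rw [hLhat, hLhat]
    have e1 : ν ⬝ᵥ Sig⁻¹.mulVec (u ω) = Sig⁻¹.mulVec ν ⬝ᵥ u ω := hdotinv ν (u ω)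
    have e2 : ν' ⬝ᵥ Sig⁻¹.mulVec (u ω') = Sig⁻¹.mulVec ν' ⬝ᵥ u ω' := hdotinv ν' (u ω')
    have e3 : Sig⁻¹.mulVec (ν - ν') ⬝ᵥ u ω
        = Sig⁻¹.mulVec ν ⬝ᵥ u ω - Sig⁻¹.mulVec ν' ⬝ᵥ u ω := by
      rw [Matrix.mulVec_sub, sub_dotProduct]
    have e4 : Sig⁻¹.mulVec ν' ⬝ᵥ (u ω - u ω')
        = Sig⁻¹.mulVec ν' ⬝ᵥ u ω - Sig⁻¹.mulVec ν' ⬝ᵥ u ω' := dotProduct_sub _ _ _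
    have e5 : (ν + ν') ⬝ᵥ (ν - ν') = ν ⬝ᵥ ν - ν' ⬝ᵥ ν' := by
      rw [add_dotProduct, dotProduct_sub, dotProduct_sub, dotProduct_comm ν' ν]
      ring
    have hΦd : ∀ x : Fin D → ℝ, d ⬝ᵥ Φ.mulVec x = Φᵀ.mulVec d ⬝ᵥ x := fun x => by
      rw [Matrix.dotProduct_mulVec, ← Matrix.mulVec_transpose]
    have e6 : d ⬝ᵥ (Φ.mulVec ω - Bᵀ.mulVec g) - d ⬝ᵥ (Φ.mulVec ω' - Bᵀ.mulVec g)
        = Φᵀ.mulVec d ⬝ᵥ (ω - ω') := by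
      rw [dotProduct_sub, dotProduct_sub, dotProduct_sub, hΦd, hΦd]
      ring
    have huω : ((m : ℝ)⁻¹ •
        ∑ j, (rj j + γ * g (snext j) - Φ (sa j) ⬝ᵥ ω) • Φ (sa j)) = u ω := rfl
    have huω' : ((m : ℝ)⁻¹ •
        ∑ j, (rj j + γ * g (snext j) - Φ (sa j) ⬝ᵥ ω') • Φ (sa j)) = u ω' := rfl
    rw [huω, huω', e3, e4, e5, ← e6, e1, e2]
    ring
  rw [key]
  have h1 := abs_le.mp b1
  have h2 := abs_le.mp b2
  have h3 := abs_le.mp b3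
  have h4 := abs_le.mp b4
  rw [abs_le]
  constructor <;> linarith [h1.1, h1.2, h2.1, h2.2, h3.1, h3.2, h4.1, h4.2]
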